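/- arXiv:1503.00446 — 2 statements merged into one kernel-verified Lean document; each statement's English description precedes it below -/
import Mathlib

section
/- There exists a resolvable K_{1,3}-group divisible design of type 4^2 and index 6: the multigraph on 8 vertices consisting of two groups of size 4 with 6 edges between every pair of vertices in different groups (and no edges within groups) can be decomposed into 3-stars grouped into 16 parallel classes of two vertex-disjoint stars each. -/
/-- The multiset of edges of a simple graph on `Fin m`. -/
noncomputable def edgeMultiset {m : ℕ} (H : SimpleGraph (Fin m)) : Multiset (Sym2 (Fin m)) :=
  (Set.toFinite H.edgeSet).toFinset.val

/-- The number of edges of a simple graph on `Fin m`. -/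
noncomputable def edgeCount {m : ℕ} (H : SimpleGraph (Fin m)) : ℕ := (edgeMultiset H).card

/-- The multiset of edges of the copy of `G` given by the embedding `f`. -/
noncomputable def blockEdges {n v : ℕ} (G : SimpleGraph (Fin n)) (f : Fin n ↪ Fin v) :
    Multiset (Sym2 (Fin v)) :=
  (edgeMultiset G).map (Sym2.map ⇑f)

/-- `classes` is a resolvable decomposition of the multigraph `lam • H` into copies
of `G`: each parallel class covers every vertex exactly once, and the edges of all
blocks, counted with multiplicity, are exactly the edges of `H` taken `lam` times. -/
def IsResolvableDecomp {n v : ℕ} (lam : ℕ) (G : SimpleGraph (Fin n))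
    (H : SimpleGraph (Fin v))
    (classes : Multiset (Multiset (Fin n ↪ Fin v))) : Prop :=
  (∀ P ∈ classes, P.bind (fun f => Multiset.map ⇑f Finset.univ.val) =
      (Finset.univ : Finset (Fin v)).val) ∧
  (classes.bind id).bind (fun f => blockEdges G f) = lam • edgeMultiset H

/-- A resolvable `(λ K_v, G)`-design. -/
def IsResolvableDesign {n : ℕ} (lam v : ℕ) (G : SimpleGraph (Fin n))
    (classes : Multiset (Multiset (Fin n ↪ Fin v))) : Prop :=
  IsResolvableDecomp lam G (⊤ : SimpleGraph (Fin v)) classes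

/-- The 4-cycle `C₄`. -/
def cycle4 : SimpleGraph (Fin 4) :=
  SimpleGraph.fromRel (fun a b => (a.val, b.val) ∈ [(0,1),(1,2),(2,3),(3,0)])

/-- The kite `K₃ + e` (triangle `0,1,2` with pendant edge `{2,3}`). -/
def kite : SimpleGraph (Fin 4) :=
  SimpleGraph.fromRel (fun a b => (a.val, b.val) ∈ [(0,1),(0,2),(1,2),(2,3)])

/-- The 3-star `K_{1,3}` with center `0`. -/
def star3 : SimpleGraph (Fin 4) :=
  SimpleGraph.fromRel (fun a b => (a.val, b.val) ∈ [(0,1),(0,2),(0,3)])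

/-- The graph `K₄ - e` (missing the edge `{2,3}`). -/
def k4e : SimpleGraph (Fin 4) :=
  SimpleGraph.fromRel (fun a b => (a.val, b.val) ∈ [(0,1),(0,2),(1,2),(0,3),(1,3)])

/-- The complete bipartite host graph of group type `4²`: two groups of size 4,
adjacency exactly between different groups. -/
def host42 : SimpleGraph (Fin 8) :=
  SimpleGraph.fromRel (fun a b => a.val / 4 ≠ b.val / 4)

def st (a b c d : Fin 8) (h : Function.Injective ![a,b,c,d] := by decide) :
    Fin 4 ↪ Fin 8 := ⟨![a,b,c,d], h⟩

def myClasses : Multiset (Multiset (Fin 4 ↪ Fin 8)) :=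
  {{st 0 4 5 6, st 7 1 2 3},
   {st 1 5 6 7, st 4 2 3 0},
   {st 2 6 7 4, st 5 3 0 1},
   {st 3 7 4 5, st 6 0 1 2},
   {st 0 5 6 7, st 4 1 2 3},
   {st 1 6 7 4, st 5 2 3 0},
   {st 2 7 4 5, st 6 3 0 1},
   {st 3 4 5 6, st 7 0 1 2},
   {st 0 6 7 4, st 5 1 2 3},
   {st 1 7 4 5, st 6 2 3 0},
   {st 2 4 5 6, st 7 3 0 1},
   {st 3 5 6 7, st 4 0 1 2},
   {st 0 7 4 5, st 6 1 2 3},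
   {st 1 4 5 6, st 7 2 3 0},
   {st 2 5 6 7, st 4 3 0 1},
   {st 3 6 7 4, st 5 0 1 2}}

lemma hstar : edgeMultiset star3 = {s((0:Fin 4),1), s((0:Fin 4),2), s((0:Fin 4),3)} := by
  have h1 : (edgeMultiset star3).Nodup := (Set.toFinite star3.edgeSet).toFinset.nodup
  have h2 : ({s((0:Fin 4),1), s((0:Fin 4),2), s((0:Fin 4),3)} :
      Multiset (Sym2 (Fin 4))).Nodup := by decide
  refine (Multiset.Nodup.ext h1 h2).mpr fun e => ?_
  unfold edgeMultiset
  rw [Finset.mem_val, Set.Finite.mem_toFinset]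
  induction e using Sym2.ind with
  | _ a b =>
    rw [SimpleGraph.mem_edgeSet]
    simp only [star3, SimpleGraph.fromRel_adj]
    revert a b; decide

lemma hhost : edgeMultiset host42 = {s((0:Fin 8), 4), s((0:Fin 8), 5), s((0:Fin 8), 6), s((0:Fin 8), 7), s((1:Fin 8), 4), s((1:Fin 8), 5), s((1:Fin 8), 6), s((1:Fin 8), 7), s((2:Fin 8), 4), s((2:Fin 8), 5), s((2:Fin 8), 6), s((2:Fin 8), 7), s((3:Fin 8), 4), s((3:Fin 8), 5), s((3:Fin 8), 6), s((3:Fin 8), 7)} := by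
  have h1 : (edgeMultiset host42).Nodup := (Set.toFinite host42.edgeSet).toFinset.nodup
  have h2 : ({s((0:Fin 8), 4), s((0:Fin 8), 5), s((0:Fin 8), 6), s((0:Fin 8), 7), s((1:Fin 8), 4), s((1:Fin 8), 5), s((1:Fin 8), 6), s((1:Fin 8), 7), s((2:Fin 8), 4), s((2:Fin 8), 5), s((2:Fin 8), 6), s((2:Fin 8), 7), s((3:Fin 8), 4), s((3:Fin 8), 5), s((3:Fin 8), 6), s((3:Fin 8), 7)} : Multiset (Sym2 (Fin 8))).Nodup := by decide
  refine (Multiset.Nodup.ext h1 h2).mpr fun e => ?_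
  unfold edgeMultiset
  rw [Finset.mem_val, Set.Finite.mem_toFinset]
  induction e using Sym2.ind with
  | _ a b =>
    rw [SimpleGraph.mem_edgeSet]
    simp only [host42, SimpleGraph.fromRel_adj]
    revert a b; decide

theorem stmt12 :
    ∃ classes : Multiset (Multiset (Fin 4 ↪ Fin 8)),
      IsResolvableDecomp 6 star3 host42 classes ∧
      Multiset.card classes = 16 ∧
      ∀ P ∈ classes, Multiset.card P = 2 := by
  refine ⟨myClasses, ⟨?_, ?_⟩, by decide, by decide⟩
  · decide
  · simp only [blockEdges, hstar, hhost]
    decide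
end

section
/- There exists a resolvable K_{1,3}-group divisible design of type 4^3 and index 3: the multigraph on 12 vertices with three groups of size 4 and 3 edges between each cross-group pair can be decomposed into 3-stars grouped into 16 parallel classes (each of three vertex-disjoint stars covering all 12 vertices). -/
set_option maxRecDepth 10000

/-- The complete tripartite host graph of group type `4³`: three groups of size 4
(the residue classes mod 3 in `Fin 12`), adjacency exactly between different groups. -/

def host43 : SimpleGraph (Fin 12) :=
  SimpleGraph.fromRel (fun a b => a.val % 3 ≠ b.val % 3)

instance : DecidableRel star3.Adj := fun a b =>
  inferInstanceAs (Decidable (a ≠ b ∧ _))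
instance : DecidableRel host43.Adj := fun a b =>
  inferInstanceAs (Decidable (a ≠ b ∧ _))

lemma edgeMultiset_eq {m : ℕ} (H : SimpleGraph (Fin m)) [DecidableRel H.Adj] :
    edgeMultiset H = H.edgeFinset.val := by
  unfold edgeMultiset
  congr 1
  ext e
  simp [SimpleGraph.mem_edgeFinset]

def stBlk (c x y z : Fin 12) (h : Function.Injective ![c,x,y,z]) : Fin 4 ↪ Fin 12 :=
  ⟨![c,x,y,z], h⟩

def dev (f : Fin 4 ↪ Fin 12) (i : Fin 12) : Fin 4 ↪ Fin 12 :=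
  f.trans (Equiv.addRight i).toEmbedding

def b1 : Fin 4 ↪ Fin 12 := stBlk 4 0 3 8 (by decide)
def b2 : Fin 4 ↪ Fin 12 := stBlk 6 1 2 5 (by decide)
def b3 : Fin 4 ↪ Fin 12 := stBlk 9 7 10 11 (by decide)
def c1 : Fin 4 ↪ Fin 12 := stBlk 2 0 7 9 (by decide)

/-- 16 parallel classes: the base class developed under `Z₁₂`, plus the
orbit of `(2;0,7,9)` grouped into 4 classes. -/
def classesC : Multiset (Multiset (Fin 4 ↪ Fin 12)) :=
  (Multiset.range 12).map (fun (i : ℕ) => {dev b1 (Fin.ofNat 12 i), dev b2 (Fin.ofNat 12 i), dev b3 (Fin.ofNat 12 i)}) +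
  (Multiset.range 4).map (fun (i : ℕ) => {dev c1 (Fin.ofNat 12 i), dev c1 (Fin.ofNat 12 (i+4)), dev c1 (Fin.ofNat 12 (i+8))})

theorem stmt13 :
    ∃ classes : Multiset (Multiset (Fin 4 ↪ Fin 12)),
      IsResolvableDecomp 3 star3 host43 classes ∧
      Multiset.card classes = 16 ∧
      ∀ P ∈ classes, Multiset.card P = 3 := by
  refine ⟨classesC, ⟨?_, ?_⟩, ?_, ?_⟩
  · decide
  · simp only [blockEdges, edgeMultiset_eq]
    decide
  · decide
  · decide
end
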